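/- For every N ∈ ℕ ∪ {0} there exists a constant C > 0, depending only on N, with the following property: for all ε ∈ (0,1), A > 0, and every continuous function F : (0, ε^{−1}] → ℝ with |F(r)| ≤ A·ε³·(1+r)^{−1−2N} for all 0 < r ≤ ε^{−1}, there exists a twice continuously differentiable function b : (0, ε^{−1}] → ℝ such that b''(r) + b'(r)/r + 8(N+1)² r^{2N}(1+r^{2N+2})^{−2} b(r) = F(r) for all 0 < r ≤ ε^{−1}, lim_{r→0⁺} b(r) = 0, and |b(r)| ≤ C·A·ε²·log(2+r) for all 0 < r ≤ ε^{−1}. -/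

import Mathlib

open Filter Topology

open Set MeasureTheory intervalIntegral

noncomputable section Stmt16Aux

def sQ (N : ℕ) (r : ℝ) : ℝ := 1 + r ^ (2*N+2)
def sZ0 (N : ℕ) (r : ℝ) : ℝ := (1 - r ^ (2*N+2)) / sQ N r
def sZ0d (N : ℕ) (r : ℝ) : ℝ := (-(4*(N:ℝ)+4)) * r ^ (2*N+1) / (sQ N r)^2
def sZ0dd (N : ℕ) (r : ℝ) : ℝ :=
  (-(4*(N:ℝ)+4)) * ((2*(N:ℝ)+1) * r ^ (2*N) * sQ N r - (4*(N:ℝ)+4) * r ^ (4*N+2)) / (sQ N r)^3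
def sZ1 (N : ℕ) (r : ℝ) : ℝ := sZ0 N r * (((N:ℝ)+1) * Real.log r) + 1
def sZ1d (N : ℕ) (r : ℝ) : ℝ := sZ0d N r * (((N:ℝ)+1) * Real.log r) + sZ0 N r * ((N:ℝ)+1) / r
def sZ1dd (N : ℕ) (r : ℝ) : ℝ :=
  sZ0dd N r * (((N:ℝ)+1) * Real.log r) + 2 * sZ0d N r * ((N:ℝ)+1) / r - sZ0 N r * ((N:ℝ)+1) / r^2

lemma sQpos (N : ℕ) (r : ℝ) : 0 < sQ N r := by
  have h : r ^ (2*N+2) = (r^(N+1))^2 := by rw [← pow_mul]; ring_nf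
  unfold sQ; rw [h]; positivity

lemma sQne (N : ℕ) (r : ℝ) : sQ N r ≠ 0 := (sQpos N r).ne'

lemma hasDerivAt_P (N : ℕ) (r : ℝ) :
    HasDerivAt (fun x : ℝ => x ^ (2*N+2)) ((2*(N:ℝ)+2) * r ^ (2*N+1)) r := by
  have e : 2*N+2-1 = 2*N+1 := by omega
  have hp0 := hasDerivAt_pow (2*N+2) r
  rw [e] at hp0
  convert hp0 using 1
  rfl
  push_cast; ring

lemma hasDerivAt_sQ (N : ℕ) (r : ℝ) :
    HasDerivAt (sQ N) ((2*(N:ℝ)+2) * r ^ (2*N+1)) r := (hasDerivAt_P N r).const_add 1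

lemma hasDerivAt_sZ0 (N : ℕ) (r : ℝ) : HasDerivAt (sZ0 N) (sZ0d N r) r := by
  have h1 : HasDerivAt (fun x : ℝ => 1 - x ^ (2*N+2)) (-((2*(N:ℝ)+2) * r ^ (2*N+1))) r :=
    (hasDerivAt_P N r).const_sub 1
  have := h1.div (hasDerivAt_sQ N r) (sQne N r)
  convert this using 1
  rfl
  rfl
  rfl
  have hQ : (1:ℝ) + r ^ (2*N+2) ≠ 0 := sQne N r
  unfold sZ0d sQ
  rw [div_eq_div_iff (pow_ne_zero 2 hQ) (pow_ne_zero 2 hQ)]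
  ring

lemma hasDerivAt_sZ0d (N : ℕ) (r : ℝ) : HasDerivAt (sZ0d N) (sZ0dd N r) r := by
  have hq : HasDerivAt (fun x : ℝ => (sQ N x)^2)
      ((2:ℕ) * (sQ N r)^1 * ((2*(N:ℝ)+2) * r ^ (2*N+1))) r := (hasDerivAt_sQ N r).pow 2
  have hn : HasDerivAt (fun x : ℝ => (-(4*(N:ℝ)+4)) * x ^ (2*N+1))
      ((-(4*(N:ℝ)+4)) * ((2*(N:ℝ)+1) * r ^ (2*N))) r := by
    have e : 2*N+1-1 = 2*N := by omega
    have hp0 := hasDerivAt_pow (2*N+1) r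
    rw [e] at hp0
    have h := hp0.const_mul (-(4*(N:ℝ)+4))
    convert h using 1
    rfl
    rfl
    push_cast; ring
  have := hn.div hq (pow_ne_zero 2 (sQne N r))
  convert this using 1
  rfl
  rfl
  rfl
  have hQ : (1:ℝ) + r ^ (2*N+2) ≠ 0 := sQne N r
  unfold sZ0dd sQ
  rw [div_eq_div_iff (pow_ne_zero 3 hQ) (pow_ne_zero 2 (pow_ne_zero 2 hQ))]
  push_cast; ring

lemma hasDerivAt_sZ1 (N : ℕ) {r : ℝ} (hr : 0 < r) : HasDerivAt (sZ1 N) (sZ1d N r) r := by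
  have hlog : HasDerivAt Real.log r⁻¹ r := Real.hasDerivAt_log hr.ne'
  have h := ((hasDerivAt_sZ0 N r).mul (hlog.const_mul ((N:ℝ)+1))).add_const 1
  convert h using 1
  rfl
  rfl
  rfl
  unfold sZ1d
  field_simp

lemma hasDerivAt_sZ1d (N : ℕ) {r : ℝ} (hr : 0 < r) : HasDerivAt (sZ1d N) (sZ1dd N r) r := by
  have hlog : HasDerivAt Real.log r⁻¹ r := Real.hasDerivAt_log hr.ne'
  have h1 := (hasDerivAt_sZ0d N r).mul (hlog.const_mul ((N:ℝ)+1))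
  have h2 := ((hasDerivAt_sZ0 N r).mul_const ((N:ℝ)+1)).mul (hasDerivAt_inv hr.ne')
  have h := h1.add h2
  have hfun : sZ1d N = fun x => sZ0d N x * (((N:ℝ)+1) * Real.log x)
      + (sZ0 N x * ((N:ℝ)+1)) * x⁻¹ := by
    funext x; unfold sZ1d; ring
  rw [hfun]
  convert h using 1
  rfl
  rfl
  rfl
  unfold sZ1dd
  field_simp
  ring

lemma ode0 (N : ℕ) {r : ℝ} (hr : 0 < r) :
    sZ0dd N r + sZ0d N r / r + 8*((N:ℝ)+1)^2 * r^(2*N) / (1 + r^(2*N+2))^2 * sZ0 N r = 0 := by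
  have hQ : (1:ℝ) + r^(2*N+2) ≠ 0 := sQne N r
  unfold sZ0dd sZ0d sZ0 sQ
  field_simp
  ring

lemma ode1 (N : ℕ) {r : ℝ} (hr : 0 < r) :
    sZ1dd N r + sZ1d N r / r + 8*((N:ℝ)+1)^2 * r^(2*N) / (1 + r^(2*N+2))^2 * sZ1 N r = 0 := by
  have hQ : (1:ℝ) + r^(2*N+2) ≠ 0 := sQne N r
  unfold sZ1dd sZ1d sZ1 sZ0dd sZ0d sZ0 sQ
  field_simp
  ring

lemma wronskian (N : ℕ) {r : ℝ} (hr : 0 < r) :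
    sZ1d N r * sZ0 N r * r - sZ0d N r * sZ1 N r * r = (N:ℝ)+1 := by
  have hQ : (1:ℝ) + r^(2*N+2) ≠ 0 := sQne N r
  unfold sZ1d sZ1 sZ0d sZ0 sQ
  field_simp
  ring

lemma absZ0_le_one (N : ℕ) {r : ℝ} (hr : 0 ≤ r) : |sZ0 N r| ≤ 1 := by
  have hP : 0 ≤ r^(2*N+2) := pow_nonneg hr _
  unfold sZ0 sQ
  have e : |1 + r^(2*N+2)| = 1 + r^(2*N+2) := abs_of_pos (by linarith)
  rw [abs_div, e, div_le_one (by linarith)]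
  exact abs_le.2 ⟨by linarith, by linarith⟩

lemma absZ1_le (N : ℕ) {r : ℝ} (hr : 0 < r) :
    |sZ1 N r| ≤ ((N:ℝ)+1) * |Real.log r| + 1 := by
  unfold sZ1
  refine (abs_add_le _ _).trans ?_
  rw [abs_one, abs_mul, abs_mul]
  have h1 : |sZ0 N r| ≤ 1 := absZ0_le_one N hr.le
  have h2 : |((N:ℝ)+1)| = (N:ℝ)+1 := abs_of_pos (by positivity)
  rw [h2]
  nlinarith [abs_nonneg (Real.log r), abs_nonneg (sZ0 N r),
    mul_le_of_le_one_left (mul_nonneg (by positivity) (abs_nonneg (Real.log r))) h1]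

lemma rlog_le_one {r : ℝ} (h0 : 0 < r) (h1 : r ≤ 1) : r * |Real.log r| ≤ 1 := by
  have hlr : Real.log r ≤ 0 := Real.log_nonpos h0.le h1
  have h2 : Real.log r⁻¹ ≤ r⁻¹ - 1 := Real.log_le_sub_one_of_pos (by positivity)
  rw [Real.log_inv] at h2
  rw [abs_of_nonpos hlr]
  have h3 : r * (-Real.log r) ≤ r * (r⁻¹ - 1) :=
    mul_le_mul_of_nonneg_left (by linarith) h0.le
  have h4 : r * (r⁻¹ - 1) = 1 - r := by field_simp
  linarith

lemma contOn_Ioi_of_deriv {f f' : ℝ → ℝ} (h : ∀ x : ℝ, 0 < x → HasDerivAt f (f' x) x) :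
    ContinuousOn f (Ioi 0) :=
  fun x hx => ((h x hx).continuousAt).continuousWithinAt

def gg0 (N : ℕ) (Ft : ℝ → ℝ) (ρ : ℝ) : ℝ := sZ0 N ρ * Ft ρ * ρ
def gg1 (N : ℕ) (Ft : ℝ → ℝ) (ρ : ℝ) : ℝ := sZ1 N ρ * Ft ρ * ρ
def II0 (N : ℕ) (Ft : ℝ → ℝ) (r : ℝ) : ℝ := ∫ t in (0:ℝ)..r, gg0 N Ft t
def II1 (N : ℕ) (Ft : ℝ → ℝ) (r : ℝ) : ℝ := ∫ t in (0:ℝ)..r, gg1 N Ft t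
def bb (N : ℕ) (Ft : ℝ → ℝ) (r : ℝ) : ℝ :=
  ((N:ℝ)+1)⁻¹ * (sZ1 N r * II0 N Ft r - sZ0 N r * II1 N Ft r)
def bb1 (N : ℕ) (Ft : ℝ → ℝ) (r : ℝ) : ℝ :=
  ((N:ℝ)+1)⁻¹ * (sZ1d N r * II0 N Ft r - sZ0d N r * II1 N Ft r)
def bb2 (N : ℕ) (Ft : ℝ → ℝ) (r : ℝ) : ℝ :=
  ((N:ℝ)+1)⁻¹ * (sZ1dd N r * II0 N Ft r - sZ0dd N r * II1 N Ft r) + Ft r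

section MainAux
variable (N : ℕ) (Ft : ℝ → ℝ) (hFtc : ContinuousOn Ft (Ioi 0))

lemma gg0_cont (hFtc : ContinuousOn Ft (Ioi 0)) : ContinuousOn (gg0 N Ft) (Ioi 0) :=
  ((contOn_Ioi_of_deriv (fun x _ => hasDerivAt_sZ0 N x)).mul hFtc).mul continuousOn_id

lemma gg1_cont (hFtc : ContinuousOn Ft (Ioi 0)) : ContinuousOn (gg1 N Ft) (Ioi 0) :=
  ((contOn_Ioi_of_deriv (fun x hx => hasDerivAt_sZ1 N hx)).mul hFtc).mul continuousOn_id

lemma intInt_of_bdd {g : ℝ → ℝ} (hg : ContinuousOn g (Ioi 0)) {r M : ℝ} (hr : 0 < r)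
    (hM : ∀ ρ ∈ Ioc (0:ℝ) r, |g ρ| ≤ M) : IntervalIntegrable g MeasureTheory.volume 0 r := by
  rw [intervalIntegrable_iff, uIoc_of_le hr.le]
  have meas : AEStronglyMeasurable g (volume.restrict (Ioc 0 r)) :=
    (hg.mono (Ioc_subset_Ioi_self)).aestronglyMeasurable measurableSet_Ioc
  refine Integrable.mono' (g := fun _ => M) ?_ meas ?_
  · exact integrableOn_const measure_Ioc_lt_top.ne
  · filter_upwards [MeasureTheory.ae_restrict_mem measurableSet_Ioc] with ρ hρ
    simpa [Real.norm_eq_abs] using hM ρ hρ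

lemma abs_intIntegral_le {g : ℝ → ℝ} {r M : ℝ} (hr : 0 < r)
    (hM : ∀ ρ ∈ Ioc (0:ℝ) r, |g ρ| ≤ M) : |∫ t in (0:ℝ)..r, g t| ≤ M * r := by
  have h := intervalIntegral.norm_integral_le_of_norm_le_const (C := M) (f := g)
    (a := 0) (b := r) (fun x hx => by
      rw [uIoc_of_le hr.le] at hx
      simpa [Real.norm_eq_abs] using hM x hx)
  simpa [Real.norm_eq_abs, abs_of_pos hr] using h

lemma hasDerivAt_II0 (hFtc : ContinuousOn Ft (Ioi 0)) {r : ℝ} (hr : 0 < r)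
    (hint : IntervalIntegrable (gg0 N Ft) MeasureTheory.volume 0 r) :
    HasDerivAt (II0 N Ft) (gg0 N Ft r) r := by
  apply intervalIntegral.integral_hasDerivAt_right hint
  · exact ⟨Ioi 0, Ioi_mem_nhds hr,
      ((gg0_cont N Ft hFtc).aestronglyMeasurable measurableSet_Ioi)⟩
  · exact (gg0_cont N Ft hFtc).continuousAt (Ioi_mem_nhds hr)

lemma hasDerivAt_II1 (hFtc : ContinuousOn Ft (Ioi 0)) {r : ℝ} (hr : 0 < r)
    (hint : IntervalIntegrable (gg1 N Ft) MeasureTheory.volume 0 r) :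
    HasDerivAt (II1 N Ft) (gg1 N Ft r) r := by
  apply intervalIntegral.integral_hasDerivAt_right hint
  · exact ⟨Ioi 0, Ioi_mem_nhds hr,
      ((gg1_cont N Ft hFtc).aestronglyMeasurable measurableSet_Ioi)⟩
  · exact (gg1_cont N Ft hFtc).continuousAt (Ioi_mem_nhds hr)

lemma gg0_bd {K r : ℝ} (hK : ∀ ρ, 0 < ρ → |Ft ρ| ≤ K) (hr : 0 < r) :
    ∀ ρ ∈ Ioc (0:ℝ) r, |gg0 N Ft ρ| ≤ K * r := by
  intro ρ hρ
  obtain ⟨hρ0, hρr⟩ := hρ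
  have h1 : |sZ0 N ρ| ≤ 1 := absZ0_le_one N hρ0.le
  have h2 := hK ρ hρ0
  have hK0 : 0 ≤ K := (abs_nonneg _).trans h2
  unfold gg0
  rw [abs_mul, abs_mul, abs_of_pos hρ0]
  have hm : |sZ0 N ρ| * |Ft ρ| ≤ K := (mul_le_of_le_one_left (abs_nonneg _) h1).trans h2
  calc |sZ0 N ρ| * |Ft ρ| * ρ ≤ K * ρ := mul_le_mul_of_nonneg_right hm hρ0.le
    _ ≤ K * r := mul_le_mul_of_nonneg_left hρr hK0

lemma gg1_bd {K r : ℝ} (hK : ∀ ρ, 0 < ρ → |Ft ρ| ≤ K) (hr : 0 < r) :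
    ∀ ρ ∈ Ioc (0:ℝ) r, |gg1 N Ft ρ| ≤ K * (((N:ℝ)+1) * (1 + r * Real.log (2+r)) + r) := by
  intro ρ hρ
  obtain ⟨hρ0, hρr⟩ := hρ
  have hK0 : 0 ≤ K := (abs_nonneg _).trans (hK ρ hρ0)
  have hN0 : (0:ℝ) ≤ (N:ℝ)+1 := by positivity
  have hlog2r : 0 ≤ Real.log (2+r) := Real.log_nonneg (by linarith)
  have h1 : |gg1 N Ft ρ| ≤ (((N:ℝ)+1) * |Real.log ρ| + 1) * (K * ρ) := by
    unfold gg1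
    rw [abs_mul, abs_mul, abs_of_pos hρ0]
    have ha := absZ1_le N hρ0
    have hb := hK ρ hρ0
    have hm : |sZ1 N ρ| * |Ft ρ| ≤ (((N:ℝ)+1) * |Real.log ρ| + 1) * K :=
      mul_le_mul ha hb (abs_nonneg _) (by positivity)
    calc |sZ1 N ρ| * |Ft ρ| * ρ ≤ ((((N:ℝ)+1) * |Real.log ρ| + 1) * K) * ρ :=
        mul_le_mul_of_nonneg_right hm hρ0.le
      _ = (((N:ℝ)+1) * |Real.log ρ| + 1) * (K * ρ) := by ring
  refine h1.trans ?_
  rcases le_or_gt ρ 1 with hle | hgt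
  · have h2 : ρ * |Real.log ρ| ≤ 1 := rlog_le_one hρ0 hle
    have e1 : (((N:ℝ)+1) * |Real.log ρ| + 1) * (K * ρ)
        = K * (((N:ℝ)+1) * (ρ * |Real.log ρ|)) + K * ρ := by ring
    have e2 : K * (((N:ℝ)+1) * (ρ * |Real.log ρ|)) ≤ K * (((N:ℝ)+1) * 1) :=
      mul_le_mul_of_nonneg_left (mul_le_mul_of_nonneg_left h2 hN0) hK0
    have e3 : K * ρ ≤ K * r := mul_le_mul_of_nonneg_left hρr hK0
    have e4 : 0 ≤ K * (((N:ℝ)+1) * (r * Real.log (2+r))) := by positivity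
    have e5 : K * (((N:ℝ)+1) * (1 + r * Real.log (2+r)) + r)
        = K * (((N:ℝ)+1) * 1) + K * (((N:ℝ)+1) * (r * Real.log (2+r))) + K * r := by ring
    linarith
  · have h2 : |Real.log ρ| ≤ Real.log (2+r) := by
      rw [abs_of_nonneg (Real.log_nonneg hgt.le)]
      exact Real.log_le_log hρ0 (by linarith)
    have e1 : (((N:ℝ)+1) * |Real.log ρ| + 1) * (K * ρ)
        = K * (((N:ℝ)+1) * (ρ * |Real.log ρ|)) + K * ρ := by ring
    have e2 : ρ * |Real.log ρ| ≤ r * Real.log (2+r) :=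
      mul_le_mul hρr h2 (abs_nonneg _) hr.le
    have e3 : K * (((N:ℝ)+1) * (ρ * |Real.log ρ|))
        ≤ K * (((N:ℝ)+1) * (r * Real.log (2+r))) :=
      mul_le_mul_of_nonneg_left (mul_le_mul_of_nonneg_left e2 hN0) hK0
    have e4 : K * ρ ≤ K * r := mul_le_mul_of_nonneg_left hρr hK0
    have e5 : 0 ≤ K * ((N:ℝ)+1) := mul_nonneg hK0 hN0
    have e6 : K * (((N:ℝ)+1) * (1 + r * Real.log (2+r)) + r)
        = K * ((N:ℝ)+1) + K * (((N:ℝ)+1) * (r * Real.log (2+r))) + K * r := by ring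
    linarith

lemma gg0_int {K r : ℝ} (hFtc : ContinuousOn Ft (Ioi 0)) (hK : ∀ ρ, 0 < ρ → |Ft ρ| ≤ K)
    (hr : 0 < r) : IntervalIntegrable (gg0 N Ft) MeasureTheory.volume 0 r :=
  intInt_of_bdd (gg0_cont N Ft hFtc) hr (gg0_bd N Ft hK hr)

lemma gg1_int {K r : ℝ} (hFtc : ContinuousOn Ft (Ioi 0)) (hK : ∀ ρ, 0 < ρ → |Ft ρ| ≤ K)
    (hr : 0 < r) : IntervalIntegrable (gg1 N Ft) MeasureTheory.volume 0 r :=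
  intInt_of_bdd (gg1_cont N Ft hFtc) hr (gg1_bd N Ft hK hr)

lemma hasDerivAt_bb {K : ℝ} (hFtc : ContinuousOn Ft (Ioi 0))
    (hK : ∀ ρ, 0 < ρ → |Ft ρ| ≤ K) {r : ℝ} (hr : 0 < r) :
    HasDerivAt (bb N Ft) (bb1 N Ft r) r := by
  have h0 := hasDerivAt_II0 N Ft hFtc hr (gg0_int N Ft hFtc hK hr)
  have h1 := hasDerivAt_II1 N Ft hFtc hr (gg1_int N Ft hFtc hK hr)
  have h := (((hasDerivAt_sZ1 N hr).mul h0).sub ((hasDerivAt_sZ0 N r).mul h1)).const_mul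
    (((N:ℝ)+1)⁻¹)
  convert h using 1
  rfl
  rfl
  rfl
  unfold bb1 gg0 gg1
  ring

lemma hasDerivAt_bb1 {K : ℝ} (hFtc : ContinuousOn Ft (Ioi 0))
    (hK : ∀ ρ, 0 < ρ → |Ft ρ| ≤ K) {r : ℝ} (hr : 0 < r) :
    HasDerivAt (bb1 N Ft) (bb2 N Ft r) r := by
  have h0 := hasDerivAt_II0 N Ft hFtc hr (gg0_int N Ft hFtc hK hr)
  have h1 := hasDerivAt_II1 N Ft hFtc hr (gg1_int N Ft hFtc hK hr)
  have h := (((hasDerivAt_sZ1d N hr).mul h0).sub ((hasDerivAt_sZ0d N r).mul h1)).const_mul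
    (((N:ℝ)+1)⁻¹)
  convert h using 1
  rfl
  rfl
  rfl
  unfold bb2 gg0 gg1
  have hw := wronskian N hr
  have hc : (((N:ℝ)+1)⁻¹) * ((N:ℝ)+1) = 1 := inv_mul_cancel₀ (by positivity)
  linear_combination (-(((N:ℝ)+1)⁻¹ * Ft r)) * hw - (Ft r) * hc

lemma contOn_sZ0dd : ContinuousOn (sZ0dd N) (Ioi 0) := by
  unfold sZ0dd sQ
  apply ContinuousOn.div
  · fun_prop
  · fun_prop
  · intro x _
    exact pow_ne_zero 3 (sQne N x)

lemma contOn_sZ1dd : ContinuousOn (sZ1dd N) (Ioi 0) := by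
  have hlog : ContinuousOn Real.log (Ioi 0) := by
    apply Real.continuousOn_log.mono
    intro x hx
    simp only [Set.mem_compl_iff, Set.mem_singleton_iff]
    exact ne_of_gt hx
  have hZ0 : ContinuousOn (sZ0 N) (Ioi 0) := contOn_Ioi_of_deriv (fun x _ => hasDerivAt_sZ0 N x)
  have hZ0d : ContinuousOn (sZ0d N) (Ioi 0) :=
    contOn_Ioi_of_deriv (fun x _ => hasDerivAt_sZ0d N x)
  unfold sZ1dd
  have hne : ∀ x ∈ Ioi (0:ℝ), x ≠ 0 := fun x hx => ne_of_gt hx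
  have h1 : ContinuousOn (fun r : ℝ => sZ0dd N r * (((N:ℝ)+1) * Real.log r)) (Ioi 0) :=
    (contOn_sZ0dd N).mul (continuousOn_const.mul hlog)
  have h2 : ContinuousOn (fun r : ℝ => 2 * sZ0d N r * ((N:ℝ)+1) / r) (Ioi 0) :=
    (((continuousOn_const.mul hZ0d).mul continuousOn_const).div continuousOn_id hne)
  have h3 : ContinuousOn (fun r : ℝ => sZ0 N r * ((N:ℝ)+1) / r^2) (Ioi 0) :=
    ((hZ0.mul continuousOn_const).div (continuousOn_pow 2)
      (fun x hx => pow_ne_zero 2 (ne_of_gt hx)))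
  exact (h1.add h2).sub h3

lemma contOn_bb2 {K : ℝ} (hFtc : ContinuousOn Ft (Ioi 0))
    (hK : ∀ ρ, 0 < ρ → |Ft ρ| ≤ K) : ContinuousOn (bb2 N Ft) (Ioi 0) := by
  have hI0 : ContinuousOn (II0 N Ft) (Ioi 0) :=
    contOn_Ioi_of_deriv (fun x hx => hasDerivAt_II0 N Ft hFtc hx (gg0_int N Ft hFtc hK hx))
  have hI1 : ContinuousOn (II1 N Ft) (Ioi 0) :=
    contOn_Ioi_of_deriv (fun x hx => hasDerivAt_II1 N Ft hFtc hx (gg1_int N Ft hFtc hK hx))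
  unfold bb2
  exact (continuousOn_const.mul ((((contOn_sZ1dd N).mul hI0)).sub
    (((contOn_sZ0dd N).mul hI1)))).add hFtc

lemma contDiffOn_bb {K : ℝ} (hFtc : ContinuousOn Ft (Ioi 0))
    (hK : ∀ ρ, 0 < ρ → |Ft ρ| ≤ K) : ContDiffOn ℝ 2 (bb N Ft) (Ioi 0) := by
  have hder : ∀ x ∈ Ioi (0:ℝ), HasDerivAt (bb N Ft) (bb1 N Ft x) x :=
    fun x hx => hasDerivAt_bb N Ft hFtc hK hx
  have heq : EqOn (deriv (bb N Ft)) (bb1 N Ft) (Ioi 0) := fun x hx => (hder x hx).deriv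
  have hder1 : ∀ x ∈ Ioi (0:ℝ), HasDerivAt (bb1 N Ft) (bb2 N Ft x) x :=
    fun x hx => hasDerivAt_bb1 N Ft hFtc hK hx
  have heq1 : EqOn (deriv (bb1 N Ft)) (bb2 N Ft) (Ioi 0) := fun x hx => (hder1 x hx).deriv
  rw [show (2 : WithTop ℕ∞) = 1 + 1 from rfl, contDiffOn_succ_iff_deriv_of_isOpen isOpen_Ioi]
  refine ⟨fun x hx => ((hder x hx).differentiableAt.differentiableWithinAt), ?_, ?_⟩
  · intro h; exact absurd h (by simp)
  · apply ContDiffOn.congr ?_ heq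
    rw [show (1 : WithTop ℕ∞) = 0 + 1 from rfl,
      contDiffOn_succ_iff_deriv_of_isOpen isOpen_Ioi]
    refine ⟨fun x hx => ((hder1 x hx).differentiableAt.differentiableWithinAt), ?_, ?_⟩
    · intro h; exact absurd h (by simp)
    · rw [contDiffOn_zero]
      exact ((contOn_bb2 N Ft hFtc hK)).congr heq1

lemma ode_bb {K : ℝ} (hFtc : ContinuousOn Ft (Ioi 0))
    (hK : ∀ ρ, 0 < ρ → |Ft ρ| ≤ K) {r : ℝ} (hr : 0 < r) :
    deriv (deriv (bb N Ft)) r + deriv (bb N Ft) r / r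
      + 8 * ((N:ℝ) + 1) ^ 2 * r ^ (2 * N) / (1 + r ^ (2 * N + 2)) ^ 2 * bb N Ft r = Ft r := by
  have hder : ∀ x ∈ Ioi (0:ℝ), HasDerivAt (bb N Ft) (bb1 N Ft x) x :=
    fun x hx => hasDerivAt_bb N Ft hFtc hK hx
  have h1 : deriv (bb N Ft) r = bb1 N Ft r := (hder r hr).deriv
  have h2 : deriv (deriv (bb N Ft)) r = bb2 N Ft r := by
    have heq : deriv (bb N Ft) =ᶠ[nhds r] bb1 N Ft :=
      Filter.eventually_of_mem (Ioi_mem_nhds hr) (fun x hx => (hder x hx).deriv)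
    rw [heq.deriv_eq]
    exact (hasDerivAt_bb1 N Ft hFtc hK hr).deriv
  rw [h1, h2]
  unfold bb2 bb1 bb
  have ho0 := ode0 N hr
  have ho1 := ode1 N hr
  linear_combination (((N:ℝ)+1)⁻¹ * II0 N Ft r) * ho1 - (((N:ℝ)+1)⁻¹ * II1 N Ft r) * ho0

end MainAux

end Stmt16Aux

lemma abs_sub_le'' (x y : ℝ) : |x - y| ≤ |x| + |y| := by
  calc |x - y| = |x + -y| := by ring_nf
    _ ≤ |x| + |-y| := abs_add_le _ _
    _ = |x| + |y| := by rw [abs_neg]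

/-- the linear step of the iteration scheme in the quantized
case: for any forcing `F` on `(0, ε⁻¹]` with `|F(r)| ≤ Aε³(1+r)^{-1-2N}`, the
radial linearized equation at the standard bubble admits a solution `b`
vanishing at the origin with `|b(r)| ≤ CAε² log(2+r)`, `C = C(N)`. -/
theorem stmt16 (N : ℕ) :
    ∃ C : ℝ, 0 < C ∧
      ∀ ε A : ℝ, 0 < ε → ε < 1 → 0 < A →
        ∀ F : ℝ → ℝ, ContinuousOn F (Set.Ioc 0 ε⁻¹) →
          (∀ r : ℝ, 0 < r → r ≤ ε⁻¹ →
            |F r| ≤ A * ε ^ 3 * (1 + r) ^ (-1 - 2 * (N : ℝ))) →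
          ∃ b : ℝ → ℝ, ContDiffOn ℝ 2 b (Set.Ioc 0 ε⁻¹) ∧
            (∀ r : ℝ, 0 < r → r ≤ ε⁻¹ →
              deriv (deriv b) r + deriv b r / r
                + 8 * (N + 1 : ℝ) ^ 2 * r ^ (2 * N) / (1 + r ^ (2 * N + 2)) ^ 2 * b r
              = F r) ∧
            Tendsto b (nhdsWithin 0 (Set.Ioi 0)) (nhds 0) ∧
            (∀ r : ℝ, 0 < r → r ≤ ε⁻¹ →
              |b r| ≤ C * A * ε ^ 2 * Real.log (2 + r)) := by
  refine ⟨100*((N:ℝ)+3), by positivity, ?_⟩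
  intro ε A hε hε1 hA F hFc hFb
  have hεinv : 0 < ε⁻¹ := by positivity
  have hN0 : (0:ℝ) ≤ (N:ℝ) := Nat.cast_nonneg N
  set Ft : ℝ → ℝ := fun ρ => F (min ρ ε⁻¹) with hFt_def
  have hFtc : ContinuousOn Ft (Ioi 0) := by
    apply hFc.comp ((continuous_id.min continuous_const).continuousOn)
    intro ρ hρ
    exact ⟨lt_min hρ hεinv, min_le_right _ _⟩
  have hFt_eq : ∀ ρ : ℝ, 0 < ρ → ρ ≤ ε⁻¹ → Ft ρ = F ρ := by
    intro ρ h1 h2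
    simp only [hFt_def]
    rw [min_eq_left h2]
  have hAε : 0 < A * ε^3 := by positivity
  have hKbd : ∀ ρ : ℝ, 0 < ρ → |Ft ρ| ≤ A * ε^3 := by
    intro ρ hρ
    have h1 : 0 < min ρ ε⁻¹ := lt_min hρ hεinv
    have h2 := hFb (min ρ ε⁻¹) h1 (min_le_right _ _)
    refine h2.trans ?_
    have h3 : (1 + min ρ ε⁻¹) ^ (-1 - 2*(N:ℝ)) ≤ 1 :=
      Real.rpow_le_one_of_one_le_of_nonpos (by linarith) (by linarith)
    nlinarith
  have hdecay : ∀ ρ : ℝ, 0 < ρ → ρ ≤ ε⁻¹ → |Ft ρ| * ρ ≤ A * ε^3 := by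
    intro ρ h1 h2
    rw [hFt_eq ρ h1 h2]
    have h3 := hFb ρ h1 h2
    have h4 : (1+ρ) ^ (-1 - 2*(N:ℝ)) * ρ ≤ 1 := by
      have h5 : (1+ρ) ^ (-1 - 2*(N:ℝ)) ≤ (1+ρ)⁻¹ := by
        rw [← Real.rpow_neg_one (1+ρ)]
        exact Real.rpow_le_rpow_of_exponent_le (by linarith) (by linarith)
      have h6 : (1+ρ)⁻¹ * ρ ≤ 1 := by
        have h7 : (1+ρ)⁻¹ * ρ ≤ (1+ρ)⁻¹ * (1+ρ) :=
          mul_le_mul_of_nonneg_left (by linarith) (by positivity)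
        rwa [inv_mul_cancel₀ (by positivity : (1+ρ:ℝ) ≠ 0)] at h7
      calc (1+ρ)^(-1-2*(N:ℝ)) * ρ ≤ (1+ρ)⁻¹ * ρ := mul_le_mul_of_nonneg_right h5 h1.le
        _ ≤ 1 := h6
    calc |F ρ| * ρ ≤ (A*ε^3*(1+ρ)^(-1-2*(N:ℝ))) * ρ := mul_le_mul_of_nonneg_right h3 h1.le
      _ = A*ε^3 * ((1+ρ)^(-1-2*(N:ℝ)) * ρ) := by ring
      _ ≤ A*ε^3 * 1 := mul_le_mul_of_nonneg_left h4 hAε.le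
      _ = A*ε^3 := mul_one _
  have hg0pt : ∀ ρ : ℝ, 0 < ρ → |gg0 N Ft ρ| ≤ |Ft ρ| * ρ := by
    intro ρ hρ0
    unfold gg0
    rw [abs_mul, abs_mul, abs_of_pos hρ0]
    have h := absZ0_le_one N hρ0.le
    exact mul_le_mul_of_nonneg_right (mul_le_of_le_one_left (abs_nonneg _) h) hρ0.le
  have hg1pt : ∀ ρ : ℝ, 0 < ρ →
      |gg1 N Ft ρ| ≤ (((N:ℝ)+1) * |Real.log ρ| + 1) * (|Ft ρ| * ρ) := by
    intro ρ hρ0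
    unfold gg1
    rw [abs_mul, abs_mul, abs_of_pos hρ0, mul_assoc]
    exact mul_le_mul_of_nonneg_right (absZ1_le N hρ0) (by positivity)
  have habsbb : ∀ r : ℝ,
      |bb N Ft r| ≤ |sZ1 N r| * |II0 N Ft r| + |sZ0 N r| * |II1 N Ft r| := by
    intro r
    have hc : |(((N:ℝ)+1)⁻¹)| ≤ 1 := by
      rw [abs_of_pos (by positivity : (0:ℝ) < ((N:ℝ)+1)⁻¹)]
      calc ((N:ℝ)+1)⁻¹ ≤ 1⁻¹ := by
            apply inv_anti₀ (by norm_num) (by linarith)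
        _ = 1 := inv_one
    unfold bb
    rw [abs_mul]
    calc |(((N:ℝ)+1)⁻¹)| * |sZ1 N r * II0 N Ft r - sZ0 N r * II1 N Ft r|
        ≤ 1 * (|sZ1 N r * II0 N Ft r| + |sZ0 N r * II1 N Ft r|) :=
          mul_le_mul hc (abs_sub_le'' _ _) (abs_nonneg _) zero_le_one
      _ = |sZ1 N r| * |II0 N Ft r| + |sZ0 N r| * |II1 N Ft r| := by
          rw [one_mul, abs_mul, abs_mul]
  have key : ∀ r : ℝ, 0 < r → r ≤ 1 →
      |bb N Ft r| ≤ (2*(A*ε^3)*((N:ℝ)+2)) * r := by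
    intro r h1 h2
    have hI0 : |II0 N Ft r| ≤ (A*ε^3*r) * r :=
      abs_intIntegral_le h1 (gg0_bd N Ft hKbd h1)
    have hI1 : |II1 N Ft r| ≤ (A*ε^3*((N:ℝ)+2)) * r := by
      apply abs_intIntegral_le h1
      intro ρ hρ
      obtain ⟨hρ0, hρr⟩ := hρ
      refine (hg1pt ρ hρ0).trans ?_
      have hrl : ρ * |Real.log ρ| ≤ 1 := rlog_le_one hρ0 (hρr.trans h2)
      have hstep : (((N:ℝ)+1) * |Real.log ρ| + 1) * (|Ft ρ| * ρ)
          ≤ (((N:ℝ)+1) * |Real.log ρ| + 1) * ((A*ε^3) * ρ) :=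
        mul_le_mul_of_nonneg_left
          (mul_le_mul_of_nonneg_right (hKbd ρ hρ0) hρ0.le) (by positivity)
      have e1 : (((N:ℝ)+1) * |Real.log ρ| + 1) * ((A*ε^3) * ρ)
          = (A*ε^3) * (((N:ℝ)+1) * (ρ * |Real.log ρ|)) + (A*ε^3) * ρ := by ring
      have e2 : (A*ε^3) * (((N:ℝ)+1) * (ρ * |Real.log ρ|)) ≤ (A*ε^3) * (((N:ℝ)+1) * 1) :=
        mul_le_mul_of_nonneg_left (mul_le_mul_of_nonneg_left hrl (by positivity)) hAε.le
      have e3 : (A*ε^3) * ρ ≤ (A*ε^3) * 1 :=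
        mul_le_mul_of_nonneg_left (hρr.trans h2) hAε.le
      have e5 : A*ε^3*((N:ℝ)+2) = (A*ε^3) * (((N:ℝ)+1) * 1) + (A*ε^3) * 1 := by ring
      linarith
    have hZ1r := absZ1_le N h1
    have hrl : r * |Real.log r| ≤ 1 := rlog_le_one h1 h2
    have h20 : |sZ1 N r| * |II0 N Ft r| ≤ (A*ε^3*((N:ℝ)+2)) * r := by
      have hm : |sZ1 N r| * |II0 N Ft r| ≤ (((N:ℝ)+1)*|Real.log r| +1) * ((A*ε^3*r)*r) :=
        mul_le_mul hZ1r hI0 (abs_nonneg _) (by positivity)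
      refine hm.trans ?_
      have e1 : (((N:ℝ)+1)*|Real.log r| +1) * ((A*ε^3*r)*r)
          = (A*ε^3) * (((N:ℝ)+1) * (r * (r * |Real.log r|))) + (A*ε^3)*(r*r) := by ring
      have e2 : r * (r*|Real.log r|) ≤ r * 1 := mul_le_mul_of_nonneg_left hrl h1.le
      have e3 : (A*ε^3) * (((N:ℝ)+1) * (r * (r*|Real.log r|)))
          ≤ (A*ε^3) * (((N:ℝ)+1) * (r*1)) :=
        mul_le_mul_of_nonneg_left (mul_le_mul_of_nonneg_left e2 (by positivity)) hAε.le
      have e4 : (A*ε^3)*(r*r) ≤ (A*ε^3)*(r*1) :=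
        mul_le_mul_of_nonneg_left (mul_le_mul_of_nonneg_left h2 h1.le) hAε.le
      have e5 : (A*ε^3*((N:ℝ)+2)) * r
          = (A*ε^3) * (((N:ℝ)+1) * (r*1)) + (A*ε^3)*(r*1) := by ring
      linarith
    have h21 : |sZ0 N r| * |II1 N Ft r| ≤ (A*ε^3*((N:ℝ)+2)) * r := by
      have h := absZ0_le_one N h1.le
      calc |sZ0 N r| * |II1 N Ft r| ≤ 1 * |II1 N Ft r| :=
            mul_le_mul_of_nonneg_right h (abs_nonneg _)
        _ = |II1 N Ft r| := one_mul _
        _ ≤ _ := hI1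
    have := habsbb r
    have e : (2*(A*ε^3)*((N:ℝ)+2)) * r
        = (A*ε^3*((N:ℝ)+2)) * r + (A*ε^3*((N:ℝ)+2)) * r := by ring
    linarith
  refine ⟨bb N Ft, (contDiffOn_bb N Ft hFtc hKbd).mono Set.Ioc_subset_Ioi_self, ?_, ?_, ?_⟩
  · intro r h1 h2
    have h := ode_bb N Ft hFtc hKbd h1
    rwa [hFt_eq r h1 h2] at h
  · have htend : Tendsto (fun r : ℝ => (2*(A*ε^3)*((N:ℝ)+2)) * r)
        (nhdsWithin 0 (Set.Ioi 0)) (nhds 0) := by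
      have h : Continuous (fun r : ℝ => (2*(A*ε^3)*((N:ℝ)+2)) * r) :=
        continuous_const.mul continuous_id
      have h2 := h.tendsto (0:ℝ)
      simp only [mul_zero] at h2
      exact h2.mono_left nhdsWithin_le_nhds
    refine squeeze_zero_norm' ?_ htend
    filter_upwards [Ioc_mem_nhdsGT_of_mem
      (⟨le_refl (0:ℝ), zero_lt_one⟩ : (0:ℝ) ∈ Ico (0:ℝ) 1)] with r hr
    rw [Real.norm_eq_abs]
    exact key r hr.1 hr.2
  · intro r h1 h2
    have hL : Real.log 2 ≤ Real.log (2+r) := Real.log_le_log (by norm_num) (by linarith)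
    have hLhalf : (1/2:ℝ) ≤ Real.log 2 := by
      have := Real.log_two_gt_d9; linarith
    have hL0 : 0 < Real.log (2+r) := by linarith
    have hI1 : |II1 N Ft r| ≤ (3*((N:ℝ)+2)*(A*ε^3)*Real.log (2+r)) * r := by
      apply abs_intIntegral_le h1
      intro ρ hρ
      obtain ⟨hρ0, hρr⟩ := hρ
      refine (hg1pt ρ hρ0).trans ?_
      rcases le_or_gt ρ 1 with hle | hgt
      · have hrl : ρ * |Real.log ρ| ≤ 1 := rlog_le_one hρ0 hle
        have hstep : (((N:ℝ)+1) * |Real.log ρ| + 1) * (|Ft ρ| * ρ)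
            ≤ (((N:ℝ)+1) * |Real.log ρ| + 1) * ((A*ε^3) * ρ) :=
          mul_le_mul_of_nonneg_left
            (mul_le_mul_of_nonneg_right (hKbd ρ hρ0) hρ0.le) (by positivity)
        have e1 : (((N:ℝ)+1) * |Real.log ρ| + 1) * ((A*ε^3) * ρ)
            = (A*ε^3) * (((N:ℝ)+1) * (ρ * |Real.log ρ|)) + (A*ε^3) * ρ := by ring
        have e2 : (A*ε^3) * (((N:ℝ)+1) * (ρ * |Real.log ρ|)) ≤ (A*ε^3) * (((N:ℝ)+1) * 1) :=
          mul_le_mul_of_nonneg_left (mul_le_mul_of_nonneg_left hrl (by positivity)) hAε.le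
        have e3 : (A*ε^3) * ρ ≤ (A*ε^3) * 1 :=
          mul_le_mul_of_nonneg_left hle hAε.le
        have e4 : (A*ε^3)*((N:ℝ)+2) * 1 ≤ (A*ε^3)*((N:ℝ)+2) * (3*Real.log (2+r)) :=
          mul_le_mul_of_nonneg_left (by linarith) (by positivity)
        have e5 : (A*ε^3)*((N:ℝ)+2) * (3*Real.log (2+r))
            = 3*((N:ℝ)+2)*(A*ε^3)*Real.log (2+r) := by ring
        have e6 : (A*ε^3)*((N:ℝ)+2) * 1
            = (A*ε^3) * (((N:ℝ)+1) * 1) + (A*ε^3) * 1 := by ring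
        linarith
      · have habsl : |Real.log ρ| = Real.log ρ := abs_of_nonneg (Real.log_nonneg hgt.le)
        have hlL : Real.log ρ ≤ Real.log (2+r) := Real.log_le_log hρ0 (by linarith)
        have hFρ : |Ft ρ| * ρ ≤ A*ε^3 := hdecay ρ hρ0 (hρr.trans h2)
        have s1 : (((N:ℝ)+1)*|Real.log ρ| +1) * (|Ft ρ| *ρ)
            ≤ (((N:ℝ)+1)*Real.log (2+r)+1)*(A*ε^3) := by
          apply mul_le_mul _ hFρ (by positivity) (by positivity)
          rw [habsl]
          have := mul_le_mul_of_nonneg_left hlL (by positivity : (0:ℝ) ≤ (N:ℝ)+1)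
          linarith
        refine s1.trans ?_
        have t1 : ((N:ℝ)+1)*Real.log (2+r)+1 ≤ ((N:ℝ)+3)*Real.log (2+r) := by nlinarith
        have t2 : (((N:ℝ)+1)*Real.log (2+r)+1)*(A*ε^3)
            ≤ (((N:ℝ)+3)*Real.log (2+r))*(A*ε^3) :=
          mul_le_mul_of_nonneg_right t1 hAε.le
        have t3 : 0 ≤ (2*(N:ℝ)+3) * ((A*ε^3) * Real.log (2+r)) := by positivity
        have t4 : 3*((N:ℝ)+2)*(A*ε^3)*Real.log (2+r)
            = (((N:ℝ)+3)*Real.log (2+r))*(A*ε^3)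
              + (2*(N:ℝ)+3) * ((A*ε^3) * Real.log (2+r)) := by ring
        linarith
    have hε32 : ε^3 ≤ ε^2 := pow_le_pow_of_le_one hε.le hε1.le (by norm_num)
    have hAε2 : (0:ℝ) < A*ε^2 := by positivity
    have hεr : A*ε^3*r ≤ A*ε^2 := by
      have hc : ε^3*ε⁻¹ = ε^2 := by
        rw [pow_succ, mul_assoc, mul_inv_cancel₀ hε.ne', mul_one]
      calc A*ε^3*r ≤ A*ε^3*ε⁻¹ := mul_le_mul_of_nonneg_left h2 (by positivity)
        _ = A*(ε^3*ε⁻¹) := by ring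
        _ = A*ε^2 := by rw [hc]
    have h21 : |sZ0 N r| * |II1 N Ft r| ≤ 3*((N:ℝ)+2)*(A*ε^2)*Real.log (2+r) := by
      have h := absZ0_le_one N h1.le
      have step : |sZ0 N r| * |II1 N Ft r| ≤ (3*((N:ℝ)+2)*(A*ε^3)*Real.log (2+r)) * r := by
        calc |sZ0 N r| * |II1 N Ft r| ≤ 1 * |II1 N Ft r| :=
              mul_le_mul_of_nonneg_right h (abs_nonneg _)
          _ = |II1 N Ft r| := one_mul _
          _ ≤ _ := hI1
      refine step.trans ?_
      have e1 : (3*((N:ℝ)+2)*(A*ε^3)*Real.log (2+r)) * r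
          = (3*((N:ℝ)+2)*Real.log (2+r)) * (A*ε^3*r) := by ring
      have e2 : (3*((N:ℝ)+2)*Real.log (2+r)) * (A*ε^3*r)
          ≤ (3*((N:ℝ)+2)*Real.log (2+r)) * (A*ε^2) :=
        mul_le_mul_of_nonneg_left hεr (by positivity)
      have e3 : (3*((N:ℝ)+2)*Real.log (2+r)) * (A*ε^2)
          = 3*((N:ℝ)+2)*(A*ε^2)*Real.log (2+r) := by ring
      linarith
    rcases le_or_gt r 1 with hr1 | hr1
    · have k1 := key r h1 hr1
      have k2 : (2*(A*ε^3)*((N:ℝ)+2)) * r ≤ 2*(A*ε^2)*((N:ℝ)+2) := by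
        have e1 : (2*(A*ε^3)*((N:ℝ)+2)) * r = (2*A*((N:ℝ)+2)) * (ε^3 * r) := by ring
        have e2 : ε^3 * r ≤ ε^2 * 1 :=
          mul_le_mul hε32 hr1 h1.le (by positivity)
        have e3 : (2*A*((N:ℝ)+2)) * (ε^3*r) ≤ (2*A*((N:ℝ)+2)) * (ε^2*1) :=
          mul_le_mul_of_nonneg_left e2 (by positivity)
        have e4 : (2*A*((N:ℝ)+2)) * (ε^2*1) = 2*(A*ε^2)*((N:ℝ)+2) := by ring
        linarith
      have k3 : 2*(A*ε^2)*((N:ℝ)+2) ≤ 2*(A*ε^2)*((N:ℝ)+2) * (2*Real.log (2+r)) := by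
        have h2L : (1:ℝ) ≤ 2*Real.log (2+r) := by linarith
        have := mul_le_mul_of_nonneg_left h2L
          (by positivity : (0:ℝ) ≤ 2*(A*ε^2)*((N:ℝ)+2))
        linarith
      have k4 : 2*(A*ε^2)*((N:ℝ)+2) * (2*Real.log (2+r))
          ≤ 100*((N:ℝ)+3)*A*ε^2*Real.log (2+r) := by
        have t : 0 ≤ (100*((N:ℝ)+3) - 4*((N:ℝ)+2)) * ((A*ε^2) * Real.log (2+r)) :=
          mul_nonneg (by linarith) (by positivity)
        linarith [t]
      linarith
    · have hlogr : |Real.log r| = Real.log r := abs_of_nonneg (Real.log_nonneg hr1.le)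
      have hZ1 : |sZ1 N r| ≤ ((N:ℝ)+3)*Real.log (2+r) := by
        refine (absZ1_le N h1).trans ?_
        rw [hlogr]
        have hlL : Real.log r ≤ Real.log (2+r) := Real.log_le_log h1 (by linarith)
        have := mul_le_mul_of_nonneg_left hlL (by positivity : (0:ℝ) ≤ (N:ℝ)+1)
        nlinarith
      have hI0 : |II0 N Ft r| ≤ (A*ε^3) * r := by
        apply abs_intIntegral_le h1
        intro ρ hρ
        exact (hg0pt ρ hρ.1).trans (hdecay ρ hρ.1 (hρ.2.trans h2))
      have hI0' : |II0 N Ft r| ≤ A*ε^2 := hI0.trans (by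
        have : (A*ε^3) * r = A*ε^3*r := by ring
        linarith [hεr])
      have h20 : |sZ1 N r| * |II0 N Ft r| ≤ (((N:ℝ)+3)*Real.log (2+r)) * (A*ε^2) :=
        mul_le_mul hZ1 hI0' (abs_nonneg _) (by positivity)
      have := habsbb r
      have final : (((N:ℝ)+3)*Real.log (2+r)) * (A*ε^2)
          + 3*((N:ℝ)+2)*(A*ε^2)*Real.log (2+r)
          ≤ 100*((N:ℝ)+3)*A*ε^2*Real.log (2+r) := by
        have t : 0 ≤ (100*((N:ℝ)+3) - (4*(N:ℝ)+9)) * ((A*ε^2) * Real.log (2+r)) :=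
          mul_nonneg (by linarith) (by positivity)
        linarith [t]
      linarith
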